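/- Let φ(x) = ∑_{j=0}^∞ x^j/(2j+1)!. For every natural number p and every real x, the p-th derivative of φ satisfies φ^{(p)}(x) = ∑_{j=0}^∞ ((j+p)!/(j!·(2j+2p+1)!)) x^j. Moreover, for every p there is a constant C_p > 0 such that 0 ≤ φ^{(p)}(x) ≤ e^{√x} for all x ≥ 0, and |φ^{(p)}(x)| ≤ C_p for all x ≤ 0. -/

import Mathlib

/-- The entire function `φ(x) = ∑_{j=0}^∞ x^j/(2j+1)!`. -/
noncomputable def phi (x : ℝ) : ℝ := ∑' j : ℕ, x ^ j / (Nat.factorial (2 * j + 1) : ℝ)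

open scoped Nat
noncomputable def cc (p j : ℕ) : ℝ :=
  (Nat.factorial (j + p) : ℝ) / ((Nat.factorial j : ℝ) * (Nat.factorial (2 * j + 2 * p + 1) : ℝ))

noncomputable def ff (p : ℕ) (x : ℝ) : ℝ := ∑' j : ℕ, cc p j * x ^ j

lemma cc_pos (p j : ℕ) : 0 < cc p j := by
  apply div_pos <;> positivity

lemma factorial_ineq (p j : ℕ) :
    Nat.factorial (j + p) * Nat.factorial (2 * j) ≤
      Nat.factorial j * Nat.factorial (2 * j + 2 * p + 1) := by
  induction p with
  | zero =>
    simp only [Nat.add_zero, Nat.mul_zero]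
    calc Nat.factorial j * Nat.factorial (2 * j) ≤
        Nat.factorial j * ((2*j+1) * Nat.factorial (2 * j)) :=
          Nat.mul_le_mul_left _ (Nat.le_mul_of_pos_left _ (by omega))
      _ = Nat.factorial j * Nat.factorial (2 * j + 1) := by rw [Nat.factorial_succ]
  | succ p ih =>
    have h1 : Nat.factorial (j + (p+1)) = (j + p + 1) * Nat.factorial (j + p) := by
      rw [show j + (p+1) = (j+p) + 1 by omega, Nat.factorial_succ]
    have h2 : Nat.factorial (2*j + 2*(p+1) + 1)
        = (2*j+2*p+3) * ((2*j+2*p+2) * Nat.factorial (2*j+2*p+1)) := by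
      rw [show 2*j + 2*(p+1) + 1 = (2*j+2*p+2) + 1 by omega, Nat.factorial_succ,
        show 2*j+2*p+2 = (2*j+2*p+1)+1 by omega, Nat.factorial_succ]
    rw [h1, h2]
    calc (j + p + 1) * Nat.factorial (j + p) * Nat.factorial (2 * j)
        ≤ (j + p + 1) * (Nat.factorial j * Nat.factorial (2*j+2*p+1)) := by
          rw [Nat.mul_assoc]; exact Nat.mul_le_mul_left _ ih
      _ ≤ ((2*j+2*p+3) * (2*j+2*p+2)) * (Nat.factorial j * Nat.factorial (2*j+2*p+1)) :=
          Nat.mul_le_mul_right _ (by nlinarith)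
      _ = Nat.factorial j * ((2*j+2*p+3) * ((2*j+2*p+2) * Nat.factorial (2*j+2*p+1))) := by ring

lemma cc_le (p j : ℕ) : cc p j ≤ 1 / (Nat.factorial (2 * j) : ℝ) := by
  rw [cc, div_le_div_iff₀ (by positivity) (by positivity)]
  have := factorial_ineq p j
  have : ((Nat.factorial (j + p) * Nat.factorial (2 * j) : ℕ) : ℝ)
      ≤ ((Nat.factorial j * Nat.factorial (2 * j + 2 * p + 1) : ℕ) : ℝ) := by exact_mod_cast this
  push_cast at this
  linarith

lemma cc_le' (p j : ℕ) : cc p j ≤ 1 / (Nat.factorial j : ℝ) := by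
  refine (cc_le p j).trans ?_
  apply one_div_le_one_div_of_le (by positivity)
  exact_mod_cast Nat.factorial_le (by omega)

lemma summable_ff (p : ℕ) (x : ℝ) : Summable (fun j : ℕ => cc p j * x ^ j) := by
  apply Summable.of_norm_bounded (Real.summable_pow_div_factorial |x|)
  intro j
  rw [Real.norm_eq_abs, abs_mul, abs_of_pos (cc_pos p j), abs_pow]
  calc cc p j * |x| ^ j ≤ (1 / (Nat.factorial j : ℝ)) * |x| ^ j := by
        apply mul_le_mul_of_nonneg_right (cc_le' p j) (by positivity)
    _ = |x| ^ j / (Nat.factorial j : ℝ) := by ring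

lemma cc_rec (p j : ℕ) : ((j : ℝ) + 1) * cc p (j + 1) = cc (p + 1) j := by
  rw [cc, cc]
  rw [show (j+1) + p = (j + (p+1-1)) + 1 by omega, show j + (p+1) = (j + (p+1-1)) + 1 by omega]
  rw [show 2*(j+1) + 2*p + 1 = 2*j + 2*(p+1) + 1 by omega]
  rw [Nat.factorial_succ (j + (p+1-1)), Nat.factorial_succ j]
  push_cast
  have h1 : (Nat.factorial j : ℝ) ≠ 0 := by positivity
  have h2 : (Nat.factorial (j + (p+1-1)) : ℝ) ≠ 0 := by positivity
  have h3 : (Nat.factorial (2*j + 2*(p+1) + 1) : ℝ) ≠ 0 := by positivity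
  field_simp

lemma summable_deriv_bound (p : ℕ) (R : ℝ) :
    Summable (fun n : ℕ => (n : ℝ) * cc p n * R ^ (n - 1)) := by
  rw [← summable_nat_add_iff 1]
  apply Summable.congr (summable_ff (p+1) R)
  intro n
  simp only [Nat.add_sub_cancel]
  rw [← cc_rec p n]
  push_cast
  ring

lemma hasDerivAt_ff (p : ℕ) (x : ℝ) : HasDerivAt (ff p) (ff (p + 1) x) x := by
  set R : ℝ := |x| + 1 with hR
  have hxR : x ∈ Metric.ball (0 : ℝ) R := by
    rw [Metric.mem_ball, Real.dist_eq, sub_zero]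
    linarith
  have key : HasDerivAt (fun z => ∑' n : ℕ, cc p n * z ^ n)
      (∑' n : ℕ, cc p n * ((n : ℝ) * x ^ (n - 1))) x := by
    apply hasDerivAt_tsum_of_isPreconnected
      (summable_deriv_bound p R) Metric.isOpen_ball
      (convex_ball (0:ℝ) R).isPreconnected
      (fun n y _ => (hasDerivAt_pow n y).const_mul (cc p n))
      (fun n y hy => ?_) hxR (summable_ff p x) hxR
    have hyR : |y| ≤ R := by
      rw [Metric.mem_ball, Real.dist_eq, sub_zero] at hy
      linarith
    rw [Real.norm_eq_abs, abs_mul, abs_mul, abs_of_pos (cc_pos p n), abs_pow,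
      Nat.abs_cast]
    calc cc p n * ((n:ℝ) * |y| ^ (n-1)) ≤ cc p n * ((n:ℝ) * R ^ (n-1)) := by
          apply mul_le_mul_of_nonneg_left _ (le_of_lt (cc_pos p n))
          exact mul_le_mul_of_nonneg_left (pow_le_pow_left₀ (abs_nonneg y) hyR _) (by positivity)
      _ = (n : ℝ) * cc p n * R ^ (n-1) := by ring
  have hsum : Summable (fun n : ℕ => cc p n * ((n : ℝ) * x ^ (n - 1))) := by
    apply Summable.of_norm_bounded (summable_deriv_bound p R)
    intro n
    rw [Real.norm_eq_abs, abs_mul, abs_mul, abs_of_pos (cc_pos p n), abs_pow, Nat.abs_cast]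
    calc cc p n * ((n:ℝ) * |x| ^ (n-1)) ≤ cc p n * ((n:ℝ) * R ^ (n-1)) := by
          apply mul_le_mul_of_nonneg_left _ (le_of_lt (cc_pos p n))
          apply mul_le_mul_of_nonneg_left (pow_le_pow_left₀ (abs_nonneg x) (by simp [hR]) _)
            (by positivity)
      _ = (n : ℝ) * cc p n * R ^ (n-1) := by ring
  have heq : (∑' n : ℕ, cc p n * ((n : ℝ) * x ^ (n - 1))) = ff (p + 1) x := by
    rw [Summable.tsum_eq_zero_add hsum]
    simp only [Nat.cast_zero, zero_mul, mul_zero, zero_add, Nat.add_sub_cancel]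
    rw [ff]
    apply tsum_congr
    intro j
    rw [← cc_rec p j]
    push_cast
    ring
  rw [← heq]
  exact key

lemma iter_phi (p : ℕ) : iteratedDeriv p phi = ff p := by
  induction p with
  | zero =>
    funext x
    rw [iteratedDeriv_zero, phi, ff]
    apply tsum_congr
    intro j
    rw [cc]
    have h1 : (Nat.factorial j : ℝ) ≠ 0 := by positivity
    rw [show j + 0 = j by omega, show 2*j + 2*0 + 1 = 2*j+1 by omega]
    field_simp
  | succ p ih =>
    funext x
    rw [iteratedDeriv_succ, ih]
    exact (hasDerivAt_ff p x).deriv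

lemma summable_even_exp (y : ℝ) :
    Summable (fun j : ℕ => y ^ (2 * j) / (Nat.factorial (2 * j) : ℝ)) := by
  apply Summable.of_norm_bounded (Real.summable_pow_div_factorial (|y|^2))
  intro j
  rw [Real.norm_eq_abs, abs_div, abs_pow, Nat.abs_cast, pow_mul, ← pow_mul, ← abs_pow, abs_pow,
    pow_mul]
  gcongr
  omega

lemma ff_nonneg (p : ℕ) {x : ℝ} (hx : 0 ≤ x) : 0 ≤ ff p x :=
  tsum_nonneg fun j => mul_nonneg (cc_pos p j).le (pow_nonneg hx j)

lemma ff_le_exp (p : ℕ) {x : ℝ} (hx : 0 ≤ x) : ff p x ≤ Real.exp (Real.sqrt x) := by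
  have hs : (0:ℝ) ≤ Real.sqrt x := Real.sqrt_nonneg x
  have hsq : ∀ j : ℕ, (Real.sqrt x) ^ (2 * j) = x ^ j := by
    intro j
    rw [pow_mul, Real.sq_sqrt hx]
  have key1 : ∀ j : ℕ, cc p j * x ^ j ≤ (Real.sqrt x) ^ (2*j) / (Nat.factorial (2*j) : ℝ) := by
    intro j
    rw [hsq j]
    calc cc p j * x ^ j ≤ (1 / (Nat.factorial (2*j) : ℝ)) * x ^ j :=
          mul_le_mul_of_nonneg_right (cc_le p j) (pow_nonneg hx j)
      _ = x ^ j / (Nat.factorial (2*j) : ℝ) := by ring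
  have h2 := summable_even_exp (Real.sqrt x)
  have h3 := Real.summable_pow_div_factorial (Real.sqrt x)
  calc ff p x ≤ ∑' j : ℕ, (Real.sqrt x) ^ (2*j) / (Nat.factorial (2*j) : ℝ) :=
        Summable.tsum_le_tsum key1 (summable_ff p x) h2
    _ ≤ ∑' n : ℕ, (Real.sqrt x) ^ n / (Nat.factorial n : ℝ) := by
        exact Summable.tsum_le_tsum_of_inj (fun j : ℕ => 2 * j)
          (fun a b hab => by simp only at hab; omega)
          (fun c _ => div_nonneg (pow_nonneg hs c) (Nat.cast_nonneg _))
          (fun j => le_rfl) h2 h3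
    _ = Real.exp (Real.sqrt x) := by
        rw [Real.exp_eq_exp_ℝ, NormedSpace.exp_eq_tsum_div]

lemma abs_ff_le (p : ℕ) (x : ℝ) : |ff p x| ≤ ff p |x| := by
  have hsum : Summable fun j : ℕ => ‖cc p j * x ^ j‖ := by
    apply Summable.congr (summable_ff p |x|)
    intro j
    rw [Real.norm_eq_abs, abs_mul, abs_of_pos (cc_pos p j), abs_pow]
  calc |ff p x| ≤ ∑' j : ℕ, ‖cc p j * x ^ j‖ := norm_tsum_le_tsum_norm hsum
    _ = ff p |x| := by
        rw [ff]
        apply tsum_congr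
        intro j
        rw [Real.norm_eq_abs, abs_mul, abs_of_pos (cc_pos p j), abs_pow]

open Polynomial in
noncomputable def PQ : ℕ → Polynomial ℝ × Polynomial ℝ
  | 0 => (X, 0)
  | (p+1) => (C (1/2 : ℝ) * (X ^ 3 * (PQ p).1.derivative + X * (PQ p).2),
              C (1/2 : ℝ) * (X ^ 3 * (PQ p).2.derivative - X * (PQ p).1))

lemma cc_zero (j : ℕ) : cc 0 j = 1 / (Nat.factorial (2 * j + 1) : ℝ) := by
  rw [cc, show j + 0 = j by omega, show 2*j + 2*0 + 1 = 2*j+1 by omega]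
  have h1 : (Nat.factorial j : ℝ) ≠ 0 := by positivity
  field_simp

lemma closed_form (p : ℕ) : ∀ x : ℝ, x < 0 →
    ff p x = (PQ p).1.eval (Real.sqrt (-x))⁻¹ * Real.sin (Real.sqrt (-x))
           + (PQ p).2.eval (Real.sqrt (-x))⁻¹ * Real.cos (Real.sqrt (-x)) := by
  induction p with
  | zero =>
    intro x hx
    have hxpos : (0:ℝ) < -x := by linarith
    set u := Real.sqrt (-x) with hu
    have hupos : 0 < u := Real.sqrt_pos.2 hxpos
    have hu2 : u ^ 2 = -x := Real.sq_sqrt hxpos.le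
    have hxu : x = -(u ^ 2) := by rw [hu2]; ring
    simp only [PQ, Polynomial.eval_X, Polynomial.eval_zero, zero_mul, add_zero]
    rw [Real.sin_eq_tsum u, ← tsum_mul_left]
    rw [ff]
    apply tsum_congr
    intro j
    rw [cc_zero j]
    have h1 : (-1:ℝ)^j * u^(2*j+1) = x ^ j * u := by
      rw [pow_succ, pow_mul, hxu, neg_pow]
      ring
    rw [← mul_div_assoc, h1]
    field_simp
  | succ p ih =>
    intro x hx
    have hxpos : (0:ℝ) < -x := by linarith
    set u := Real.sqrt (-x) with hu
    have hupos : 0 < u := Real.sqrt_pos.2 hxpos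
    have hune : u ≠ 0 := ne_of_gt hupos
    have heq : ff p =ᶠ[nhds x] (fun y =>
        (PQ p).1.eval (Real.sqrt (-y))⁻¹ * Real.sin (Real.sqrt (-y))
        + (PQ p).2.eval (Real.sqrt (-y))⁻¹ * Real.cos (Real.sqrt (-y))) := by
      filter_upwards [Iio_mem_nhds hx] with y hy using ih y hy
    have hd_sqrt : HasDerivAt (fun y : ℝ => Real.sqrt (-y)) (-(1/(2*u))) x := by
      have h := (Real.hasDerivAt_sqrt (show -x ≠ 0 by linarith)).comp x (hasDerivAt_neg x)
      refine h.congr_deriv ?_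
      rw [← hu]
      ring
    have hd_inv : HasDerivAt (fun y : ℝ => (Real.sqrt (-y))⁻¹) (1/(2*u^3)) x := by
      have h := hd_sqrt.inv hune
      refine h.congr_deriv ?_
      rw [← hu]
      field_simp
    have hd_P : HasDerivAt (fun y : ℝ => (PQ p).1.eval (Real.sqrt (-y))⁻¹)
        ((PQ p).1.derivative.eval u⁻¹ * (1/(2*u^3))) x := by
      exact (Polynomial.hasDerivAt (PQ p).1 u⁻¹).comp x hd_inv
    have hd_Q : HasDerivAt (fun y : ℝ => (PQ p).2.eval (Real.sqrt (-y))⁻¹)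
        ((PQ p).2.derivative.eval u⁻¹ * (1/(2*u^3))) x := by
      exact (Polynomial.hasDerivAt (PQ p).2 u⁻¹).comp x hd_inv
    have hd_sin : HasDerivAt (fun y : ℝ => Real.sin (Real.sqrt (-y)))
        (Real.cos u * (-(1/(2*u)))) x := by exact (Real.hasDerivAt_sin u).comp x hd_sqrt
    have hd_cos : HasDerivAt (fun y : ℝ => Real.cos (Real.sqrt (-y)))
        ((-Real.sin u) * (-(1/(2*u)))) x := by exact (Real.hasDerivAt_cos u).comp x hd_sqrt
    have hd : HasDerivAt (fun y : ℝ =>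
        (PQ p).1.eval (Real.sqrt (-y))⁻¹ * Real.sin (Real.sqrt (-y))
        + (PQ p).2.eval (Real.sqrt (-y))⁻¹ * Real.cos (Real.sqrt (-y)))
        ((PQ p).1.derivative.eval u⁻¹ * (1/(2*u^3)) * Real.sin u
          + (PQ p).1.eval u⁻¹ * (Real.cos u * (-(1/(2*u))))
          + ((PQ p).2.derivative.eval u⁻¹ * (1/(2*u^3)) * Real.cos u
          + (PQ p).2.eval u⁻¹ * ((-Real.sin u) * (-(1/(2*u)))))) x :=
      (hd_P.mul hd_sin).add (hd_Q.mul hd_cos)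
    have h1 : ff (p+1) x = deriv (ff p) x := ((hasDerivAt_ff p x).deriv).symm
    rw [h1, heq.deriv_eq, hd.deriv]
    simp only [PQ, Polynomial.eval_mul, Polynomial.eval_add, Polynomial.eval_sub,
      Polynomial.eval_C, Polynomial.eval_X, Polynomial.eval_pow]
    field_simp
    ring

lemma eval_abs_le (P : Polynomial ℝ) {v : ℝ} (hv : |v| ≤ 1) :
    |P.eval v| ≤ ∑ i ∈ Finset.range (P.natDegree + 1), |P.coeff i| := by
  rw [Polynomial.eval_eq_sum_range]
  refine (Finset.abs_sum_le_sum_abs _ _).trans ?_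
  apply Finset.sum_le_sum
  intro i _
  rw [abs_mul, abs_pow]
  calc |P.coeff i| * |v| ^ i ≤ |P.coeff i| * 1 :=
        mul_le_mul_of_nonneg_left (pow_le_one₀ (abs_nonneg v) hv) (abs_nonneg _)
    _ = |P.coeff i| := mul_one _

/-- For every `p`, the `p`-th derivative of `φ` is given by the power series
`φ^{(p)}(x) = ∑_{j=0}^∞ ((j+p)!/(j!·(2j+2p+1)!)) x^j`, and it satisfies
`0 ≤ φ^{(p)}(x) ≤ e^{√x}` for `x ≥ 0` and `|φ^{(p)}(x)| ≤ C_p` for `x ≤ 0`. -/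
theorem phi_iteratedDeriv_series_and_bounds (p : ℕ) :
    (∀ x : ℝ, iteratedDeriv p phi x =
      ∑' j : ℕ, ((Nat.factorial (j + p) : ℝ) /
        ((Nat.factorial j : ℝ) * (Nat.factorial (2 * j + 2 * p + 1) : ℝ))) * x ^ j) ∧
    ∃ C : ℝ, 0 < C ∧
      (∀ x : ℝ, 0 ≤ x →
        0 ≤ iteratedDeriv p phi x ∧ iteratedDeriv p phi x ≤ Real.exp (Real.sqrt x)) ∧
      (∀ x : ℝ, x ≤ 0 → |iteratedDeriv p phi x| ≤ C) := by
  constructor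
  · intro x
    rw [iter_phi p]
    rfl
  · set K : ℝ := (∑ i ∈ Finset.range ((PQ p).1.natDegree + 1), |(PQ p).1.coeff i|)
        + (∑ i ∈ Finset.range ((PQ p).2.natDegree + 1), |(PQ p).2.coeff i|) with hK
    have hK0 : 0 ≤ K := by
      apply add_nonneg <;> exact Finset.sum_nonneg fun i _ => abs_nonneg _
    refine ⟨Real.exp 1 + K + 1, by positivity, ?_, ?_⟩
    · intro x hx
      rw [iter_phi p]
      exact ⟨ff_nonneg p hx, ff_le_exp p hx⟩
    · intro x hx
      rw [iter_phi p]
      rcases le_or_gt (-1) x with h1 | h1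
      · have habs : |x| ≤ 1 := abs_le.2 ⟨h1, by linarith⟩
        calc |ff p x| ≤ ff p |x| := abs_ff_le p x
          _ ≤ Real.exp (Real.sqrt |x|) := ff_le_exp p (abs_nonneg x)
          _ ≤ Real.exp 1 := Real.exp_le_exp.2 (Real.sqrt_le_one.2 habs)
          _ ≤ Real.exp 1 + K + 1 := by linarith
      · have hx0 : x < 0 := by linarith
        set u := Real.sqrt (-x) with hu
        have hu1 : 1 ≤ u := by
          rw [hu, show (1:ℝ) = Real.sqrt 1 from (Real.sqrt_one).symm]
          exact Real.sqrt_le_sqrt (by linarith)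
        have hv : |u⁻¹| ≤ 1 := by
          rw [abs_inv, abs_of_pos (by linarith : (0:ℝ) < u)]
          exact inv_le_one_of_one_le₀ hu1
        rw [closed_form p x hx0, ← hu]
        calc |(PQ p).1.eval u⁻¹ * Real.sin u + (PQ p).2.eval u⁻¹ * Real.cos u|
            ≤ |(PQ p).1.eval u⁻¹ * Real.sin u| + |(PQ p).2.eval u⁻¹ * Real.cos u| :=
              abs_add_le _ _
          _ ≤ |(PQ p).1.eval u⁻¹| * 1 + |(PQ p).2.eval u⁻¹| * 1 := by
              rw [abs_mul, abs_mul]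
              gcongr
              · exact Real.abs_sin_le_one u
              · exact Real.abs_cos_le_one u
          _ = |(PQ p).1.eval u⁻¹| + |(PQ p).2.eval u⁻¹| := by ring
          _ ≤ K := by
              rw [hK]
              exact add_le_add (eval_abs_le _ hv) (eval_abs_le _ hv)
          _ ≤ Real.exp 1 + K + 1 := by
              have := Real.exp_pos 1
              linarith
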